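/- Let H be a real Hilbert space, K ⊆ H nonempty closed convex, a : H × H → ℝ a continuous symmetric bilinear form with a(w,w) ≥ λ‖w‖² for some λ > 0 and all w in the set of differences K − K, and b ∈ H. Then the functional Q(w) = (1/2)a(w,w) + ⟨b,w⟩ has a unique minimizer over K. -/
import Mathlib


open scoped RealInnerProductSpace

theorem stmt_1 {H : Type*} [NormedAddCommGroup H] [InnerProductSpace ℝ H] [CompleteSpace H]
    (K : Set H) (hKne : K.Nonempty) (hKc : IsClosed K) (hKconv : Convex ℝ K)
    (a : H →L[ℝ] H →L[ℝ] ℝ) (hsymm : ∀ x y, a x y = a y x)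
    (lam : ℝ) (hlam : 0 < lam)
    (hcoerc : ∀ u ∈ K, ∀ v ∈ K, lam * ‖u - v‖ ^ 2 ≤ a (u - v) (u - v))
    (b : H) :
    ∃! u, u ∈ K ∧ IsMinOn (fun w => (1 / 2) * a w w + ⟪b, w⟫) K u := by
  obtain ⟨Q, hQ⟩ : ∃ Q : H → ℝ, Q = fun w => (1 / 2) * a w w + ⟪b, w⟫ := ⟨_, rfl⟩
  rw [show (fun w => (1 / 2 : ℝ) * a w w + ⟪b, w⟫) = Q from hQ.symm]
  -- parallelogram-type identity for Q
  have key : ∀ p q : H, Q ((1/2 : ℝ) • p + (1/2 : ℝ) • q)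
      = (Q p + Q q) / 2 - (1/8) * a (p - q) (p - q) := by
    intro p q
    have hs := hsymm p q
    simp only [hQ, map_add, map_smul, map_sub, ContinuousLinearMap.add_apply,
      ContinuousLinearMap.smul_apply, ContinuousLinearMap.sub_apply, smul_eq_mul,
      inner_add_right, real_inner_smul_right]
    rw [hs]; ring
  -- midpoint membership
  have hmid : ∀ p ∈ K, ∀ q ∈ K, (1/2 : ℝ) • p + (1/2 : ℝ) • q ∈ K := by
    intro p hp q hq
    exact hKconv hp hq (by norm_num) (by norm_num) (by norm_num)
  -- key estimate for near-minimizers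
  have keyest : ∀ p ∈ K, ∀ q ∈ K,
      lam / 8 * ‖p - q‖ ^ 2 ≤ (Q p + Q q) / 2 - Q ((1/2 : ℝ) • p + (1/2 : ℝ) • q) := by
    intro p hp q hq
    have h1 := hcoerc p hp q hq
    have h2 := key p q
    nlinarith
  -- Q is bounded below on K
  obtain ⟨u0, hu0⟩ := hKne
  obtain ⟨M, hM⟩ : ∃ M : ℝ, M = ‖a u0‖ + ‖b‖ := ⟨_, rfl⟩
  have hbdd : ∀ w ∈ K, Q u0 - M ^ 2 / (2 * lam) ≤ Q w := by
    intro w hw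
    obtain ⟨d, hd⟩ : ∃ d : H, d = w - u0 := ⟨_, rfl⟩
    have hco := hcoerc w hw u0 hu0
    have h1 : |a u0 d| ≤ ‖a u0‖ * ‖d‖ := (a u0).le_opNorm d
    have h2 : |⟪b, d⟫| ≤ ‖b‖ * ‖d‖ := abs_real_inner_le_norm b d
    have hexp : Q w = Q u0 + (a u0 d + ⟪b, d⟫) + (1/2) * a d d := by
      have hw' : w = u0 + d := by rw [hd]; abel
      have hs := hsymm u0 d
      rw [hw']
      simp only [hQ, map_add, ContinuousLinearMap.add_apply, inner_add_right]
      rw [hs]; ring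
    have h3 : lam * ‖d‖ ^ 2 ≤ a d d := by rw [hd]; exact hco
    have h4 : -(M * ‖d‖) ≤ a u0 d + ⟪b, d⟫ := by
      have e1 := abs_le.1 h1
      have e2 := abs_le.1 h2
      simp only [hM]
      nlinarith [e1.1, e2.1]
    have h5 : 0 ≤ lam / 2 * ‖d‖ ^ 2 - M * ‖d‖ + M ^ 2 / (2 * lam) := by
      have heq : lam / 2 * ‖d‖ ^ 2 - M * ‖d‖ + M ^ 2 / (2 * lam)
          = (lam * ‖d‖ - M) ^ 2 / (2 * lam) := by
        field_simp; ring
      rw [heq]; positivity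
    nlinarith [hexp, h3, h4, h5]
  have hQcont : Continuous Q := by
    rw [hQ]
    apply Continuous.add
    · exact continuous_const.mul (a.continuous₂.comp (continuous_id.prodMk continuous_id))
    · exact continuous_const.inner continuous_id
  -- infimum
  obtain ⟨S, hS⟩ : ∃ S : Set ℝ, S = Q '' K := ⟨_, rfl⟩
  have hSne : S.Nonempty := ⟨Q u0, hS ▸ ⟨u0, hu0, rfl⟩⟩
  have hSbdd : BddBelow S := by
    refine ⟨Q u0 - M ^ 2 / (2 * lam), ?_⟩
    rw [hS]
    rintro x ⟨w, hw, rfl⟩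
    exact hbdd w hw
  obtain ⟨m, hm⟩ : ∃ m : ℝ, m = sInf S := ⟨_, rfl⟩
  have hmle : ∀ w ∈ K, m ≤ Q w := fun w hw => hm ▸ csInf_le hSbdd (hS ▸ ⟨w, hw, rfl⟩)
  -- minimizing sequence
  have hseq : ∀ n : ℕ, ∃ w ∈ K, Q w < m + 1 / (n + 1) := by
    intro n
    have hlt : m < m + 1 / (n + 1) := by
      have : (0:ℝ) < 1 / ((n:ℝ) + 1) := by positivity
      linarith
    obtain ⟨x, hxS, hx⟩ := exists_lt_of_csInf_lt hSne (hm ▸ hlt)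
    rw [hS] at hxS
    rw [← hm] at hx
    obtain ⟨w, hw, rfl⟩ := hxS
    exact ⟨w, hw, hx⟩
  choose u huK huQ using hseq
  -- distance estimate between near-minimizers
  have hdist : ∀ N i j : ℕ, N ≤ i → N ≤ j →
      ‖u i - u j‖ ^ 2 ≤ 8 / (lam * (N + 1)) := by
    intro N i j hNi hNj
    have hN1 : (0:ℝ) < (N:ℝ) + 1 := by positivity
    have hQi : Q (u i) < m + 1 / (N + 1) := by
      refine (huQ i).trans_le ?_
      have : (1:ℝ) / ((i:ℝ) + 1) ≤ 1 / ((N:ℝ) + 1) := by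
        apply one_div_le_one_div_of_le hN1
        exact_mod_cast by omega
      linarith
    have hQj : Q (u j) < m + 1 / (N + 1) := by
      refine (huQ j).trans_le ?_
      have : (1:ℝ) / ((j:ℝ) + 1) ≤ 1 / ((N:ℝ) + 1) := by
        apply one_div_le_one_div_of_le hN1
        exact_mod_cast by omega
      linarith
    have hmidK := hmid _ (huK i) _ (huK j)
    have h1 := hmle _ hmidK
    have h2 := keyest _ (huK i) _ (huK j)
    have h3 : lam / 8 * ‖u i - u j‖ ^ 2 ≤ 1 / ((N:ℝ) + 1) := by linarith
    rw [le_div_iff₀ (by positivity)]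
    have h4 : (1:ℝ) / ((N:ℝ) + 1) * ((N:ℝ) + 1) = 1 := by field_simp
    nlinarith [mul_le_mul_of_nonneg_right h3 (by positivity : (0:ℝ) ≤ 8 * ((N:ℝ) + 1))]
  -- Cauchy
  have hcauchy : CauchySeq u := by
    rw [Metric.cauchySeq_iff]
    intro ε hε
    obtain ⟨N, hN⟩ := exists_nat_gt (8 / (lam * ε ^ 2))
    refine ⟨N, fun i hi j hj => ?_⟩
    have hd := hdist N i j hi hj
    have hN0 : (0:ℝ) ≤ (N:ℝ) := Nat.cast_nonneg N
    have hbound : 8 / (lam * ((N:ℝ) + 1)) < ε ^ 2 := by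
      rw [div_lt_iff₀ (by positivity)]
      rw [div_lt_iff₀ (by positivity)] at hN
      nlinarith [mul_pos hlam (sq_pos_of_pos hε)]
    have hsq : ‖u i - u j‖ ^ 2 < ε ^ 2 := lt_of_le_of_lt hd hbound
    have : ‖u i - u j‖ < ε := by nlinarith [norm_nonneg (u i - u j)]
    simpa [dist_eq_norm] using this
  obtain ⟨z, hz⟩ := cauchySeq_tendsto_of_complete hcauchy
  have hzK : z ∈ K := hKc.mem_of_tendsto hz (Filter.Eventually.of_forall huK)
  have hQz : Filter.Tendsto (fun n => Q (u n)) Filter.atTop (nhds (Q z)) :=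
    (hQcont.tendsto z).comp hz
  have hQm : Filter.Tendsto (fun n => Q (u n)) Filter.atTop (nhds m) := by
    have hup : Filter.Tendsto (fun n : ℕ => m + 1 / ((n:ℝ) + 1)) Filter.atTop (nhds m) := by
      have := tendsto_const_nhds (x := m) (f := Filter.atTop (α := ℕ)) |>.add
        tendsto_one_div_add_atTop_nhds_zero_nat
      simpa using this
    exact tendsto_of_tendsto_of_tendsto_of_le_of_le tendsto_const_nhds hup
      (fun n => hmle _ (huK n)) (fun n => (huQ n).le)
  have hQzm : Q z = m := tendsto_nhds_unique hQz hQm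
  have hzmin : IsMinOn Q K z := by
    rw [isMinOn_iff]
    intro w hw
    rw [hQzm]
    exact hmle _ hw
  refine ⟨z, ⟨hzK, hzmin⟩, ?_⟩
  rintro v ⟨hvK, hvmin⟩
  have hvz : Q v ≤ Q z := isMinOn_iff.1 hvmin z hzK
  have hzv : Q z ≤ Q v := isMinOn_iff.1 hzmin v hvK
  have hmidK := hmid _ hvK _ hzK
  have hge : Q v ≤ Q ((1/2 : ℝ) • v + (1/2 : ℝ) • z) := isMinOn_iff.1 hvmin _ hmidK
  have h2 := keyest _ hvK _ hzK
  have hle0 : lam / 8 * ‖v - z‖ ^ 2 ≤ 0 := by linarith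
  have hsq : ‖v - z‖ ^ 2 ≤ 0 := by
    by_contra h
    push_neg at h
    nlinarith [mul_pos (div_pos hlam (by norm_num : (0:ℝ) < 8)) h]
  have hnorm : ‖v - z‖ = 0 := by
    have h0 : ‖v - z‖ ^ 2 = 0 := le_antisymm hsq (sq_nonneg _)
    exact pow_eq_zero_iff (by norm_num) |>.1 h0
  have hvz0 : v - z = 0 := norm_eq_zero.1 hnorm
  exact sub_eq_zero.1 hvz0
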